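/- Let I₀, …, I_m be ideals of ℂ[x₁, x₂] of finite colength, with lex standard sets Δ₀, …, Δ_m, such that S/Iⱼ is supported on the horizontal line x₂ = λⱼ with the λⱼ pairwise distinct. Then the lexicographic initial ideal of I := I₀ ∩ ⋯ ∩ I_m is M_Δ, where Δ = Δ₀ +₂ ⋯ +₂ Δ_m is the C4 sum in the second direction. -/

import Mathlib

open MvPolynomial

def IsStandardSet (Δ : Set (ℕ × ℕ)) : Prop :=
  ∀ γ : ℕ × ℕ, γ ∉ Δ → ∀ δ : ℕ × ℕ, γ + δ ∉ Δ

/-- The pair of exponents of a monomial of `ℂ[x₁, x₂]`, with `x₁ = X 0`, `x₂ = X 1`. -/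
def expPair (d : Fin 2 →₀ ℕ) : ℕ × ℕ := (d 0, d 1)

/-- The set of lexicographic leading exponents (lex order with `x₁ > x₂`) of the nonzero
elements of an ideal `I ⊆ ℂ[x₁, x₂]`.  One has `in_lex(I) = M_Δ` exactly when this set is
the complement of the standard set `Δ`. -/
def leadSet (I : Ideal (MvPolynomial (Fin 2) ℂ)) : Set (ℕ × ℕ) :=
  {α | ∃ f ∈ I, f ≠ 0 ∧ (∃ d ∈ f.support, expPair d = α) ∧
    ∀ d ∈ f.support, toLex (expPair d) ≤ toLex α}

/-- The vanishing set in `𝔸²(ℂ)` of an ideal of `ℂ[x₁, x₂]`. -/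
def zeroSet (I : Ideal (MvPolynomial (Fin 2) ℂ)) : Set (ℂ × ℂ) :=
  {z | ∀ f ∈ I, MvPolynomial.eval ![z.1, z.2] f = 0}

noncomputable section C4Aux

/-- The isomorphism `ℂ[x₁,x₂] ≅ (ℂ[x₂])[x₁]`, outer variable `x₁`. -/
def phi : MvPolynomial (Fin 2) ℂ ≃ₐ[ℂ] Polynomial (Polynomial ℂ) :=
  (MvPolynomial.finSuccEquiv ℂ 1).trans <| Polynomial.mapAlgEquiv <|
    (MvPolynomial.finSuccEquiv ℂ 0).trans <| Polynomial.mapAlgEquiv <|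
      MvPolynomial.isEmptyAlgEquiv ℂ (Fin 0)

/-- The exponent pair `(a, b)` as a `Finsupp`. -/
def ee (a b : ℕ) : Fin 2 →₀ ℕ := Finsupp.cons a (Finsupp.cons b 0)

lemma ee_apply_zero (a b : ℕ) : ee a b 0 = a := rfl

lemma ee_apply_one (a b : ℕ) : ee a b 1 = b := rfl

lemma expPair_ee (a b : ℕ) : expPair (ee a b) = (a, b) := rfl

lemma ee_eq (d : Fin 2 →₀ ℕ) : ee (d 0) (d 1) = d := by
  ext i
  fin_cases i
  · rfl
  · show (Finsupp.cons (d 0) (Finsupp.cons (d 1) 0)) (0 : Fin 1).succ = _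
    rw [Finsupp.cons_succ]
    rfl

lemma isEmptyAlgEquiv_eq_coeff (r : MvPolynomial (Fin 0) ℂ) :
    MvPolynomial.isEmptyAlgEquiv ℂ (Fin 0) r = MvPolynomial.coeff 0 r := by
  conv_lhs => rw [MvPolynomial.eq_C_of_isEmpty r]
  simp
  exact MvPolynomial.coeff_zero_C _

lemma coeff_phi (f : MvPolynomial (Fin 2) ℂ) (a b : ℕ) :
    ((phi f).coeff a).coeff b = MvPolynomial.coeff (ee a b) f := by
  simp only [phi, AlgEquiv.trans_apply, Polynomial.coe_mapAlgEquiv, Polynomial.coeff_map,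
    isEmptyAlgEquiv_eq_coeff, MvPolynomial.finSuccEquiv_coeff_coeff, ee, AlgEquiv.coe_trans,
    Function.comp_apply, RingHom.coe_coe, AlgEquiv.trans_apply]

lemma phi_X0 : phi (X 0) = Polynomial.X := by
  simp [phi, MvPolynomial.finSuccEquiv_X_zero]

lemma phi_X1 : phi (X 1) = Polynomial.C Polynomial.X := by
  have h1 : (X 1 : MvPolynomial (Fin 2) ℂ) = X (0 : Fin 1).succ := rfl
  rw [phi]
  simp [h1, MvPolynomial.finSuccEquiv_X_succ, MvPolynomial.finSuccEquiv_X_zero]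

/-- The inclusion `ℂ[x₂] → ℂ[x₁,x₂]`. -/
def psi : Polynomial ℂ →ₐ[ℂ] MvPolynomial (Fin 2) ℂ := Polynomial.aeval (X 1)

lemma phi_psi (q : Polynomial ℂ) : phi (psi q) = Polynomial.C q := by
  have h : (phi.toAlgHom.comp psi) = Polynomial.CAlgHom := by
    apply Polynomial.algHom_ext
    show phi (psi Polynomial.X) = _
    simp [psi, phi_X1, Polynomial.CAlgHom]
  have := DFunLike.congr_fun h q
  simpa [Polynomial.CAlgHom] using this

/-- The ideal `I` transported to `(ℂ[x₂])[x₁]`. -/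
def JJ (I : Ideal (MvPolynomial (Fin 2) ℂ)) : Ideal (Polynomial (Polynomial ℂ)) :=
  I.comap (phi.symm.toAlgHom.toRingHom)

lemma mem_JJ {I : Ideal (MvPolynomial (Fin 2) ℂ)} {F : Polynomial (Polynomial ℂ)} :
    F ∈ JJ I ↔ phi.symm F ∈ I := Iff.rfl

lemma phi_mem_JJ {I : Ideal (MvPolynomial (Fin 2) ℂ)} {f : MvPolynomial (Fin 2) ℂ} :
    phi f ∈ JJ I ↔ f ∈ I := by
  rw [mem_JJ, AlgEquiv.symm_apply_apply]

/-- The ideal of `a`-th coefficients of elements of `J` of degree at most `a`. -/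
def Vid {R : Type*} [CommRing R] (J : Ideal (Polynomial R)) (a : ℕ) : Ideal R where
  carrier := {p | ∃ F ∈ J, F.degree ≤ (a : WithBot ℕ) ∧ F.coeff a = p}
  add_mem' := by
    rintro p q ⟨F, hF, hdF, rfl⟩ ⟨G, hG, hdG, rfl⟩
    exact ⟨F + G, add_mem hF hG, (Polynomial.degree_add_le F G).trans (max_le hdF hdG),
      Polynomial.coeff_add F G a⟩
  zero_mem' := ⟨0, zero_mem _, by simp, rfl⟩
  smul_mem' := by
    rintro c p ⟨F, hF, hdF, rfl⟩
    refine ⟨Polynomial.C c * F, Ideal.mul_mem_left _ _ hF, ?_, by simp⟩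
    refine (Polynomial.degree_mul_le _ _).trans
      (le_trans (add_le_add Polynomial.degree_C_le hdF) ?_)
    simp

lemma mem_Vid {R : Type*} [CommRing R] {J : Ideal (Polynomial R)} {a : ℕ} {p : R} :
    p ∈ Vid J a ↔ ∃ F ∈ J, F.degree ≤ (a : WithBot ℕ) ∧ F.coeff a = p := Iff.rfl

lemma Vid_mono {R : Type*} [CommRing R] {J K : Ideal (Polynomial R)} (h : J ≤ K) (a : ℕ) :
    Vid J a ≤ Vid K a := by
  rintro p ⟨F, hF, h1, h2⟩; exact ⟨F, h hF, h1, h2⟩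

lemma toLex_le_iff (x y : ℕ × ℕ) :
    toLex x ≤ toLex y ↔ x.1 < y.1 ∨ (x.1 = y.1 ∧ x.2 ≤ y.2) :=
  Prod.Lex.le_iff

lemma leadSet_iff {I : Ideal (MvPolynomial (Fin 2) ℂ)} {a b : ℕ} :
    (a, b) ∈ leadSet I ↔ ∃ F ∈ JJ I, F.degree ≤ (a : WithBot ℕ) ∧
      (F.coeff a).degree ≤ (b : WithBot ℕ) ∧ (F.coeff a).coeff b ≠ 0 := by
  constructor
  · rintro ⟨f, hfI, hf0, ⟨d, hd, hda⟩, hlead⟩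
    have key : ∀ a' b' : ℕ, ((phi f).coeff a').coeff b' ≠ 0 →
        a' < a ∨ (a' = a ∧ b' ≤ b) := by
      intro a' b' h
      rw [coeff_phi] at h
      have := hlead (ee a' b') (MvPolynomial.mem_support_iff.2 h)
      rw [expPair_ee] at this
      simpa using (toLex_le_iff _ _).1 this
    refine ⟨phi f, phi_mem_JJ.2 hfI, ?_, ?_, ?_⟩
    · rw [Polynomial.degree_le_iff_coeff_zero]
      intro a' ha'
      by_contra h
      have hex : ∃ b', ((phi f).coeff a').coeff b' ≠ 0 := by
        by_contra hall
        push_neg at hall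
        exact h (Polynomial.ext fun n => hall n)
      obtain ⟨b', hb'⟩ := hex
      rcases key a' b' hb' with h1 | ⟨h1, _⟩ <;>
        simp [Nat.cast_lt, h1, lt_irrefl] at ha' <;> omega
    · rw [Polynomial.degree_le_iff_coeff_zero]
      intro b' hb'
      by_contra h
      rcases key a b' h with h1 | ⟨_, h2⟩
      · omega
      · rw [Nat.cast_lt] at hb'; omega
    · have hd0 : d 0 = a := congrArg Prod.fst hda
      have hd1 : d 1 = b := congrArg Prod.snd hda
      rw [coeff_phi]
      have : ee a b = d := by rw [← hd0, ← hd1, ee_eq]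
      rw [this]
      exact MvPolynomial.mem_support_iff.1 hd
  · rintro ⟨F, hFJ, hdF, hdFa, hb⟩
    have key : ∀ d : Fin 2 →₀ ℕ, MvPolynomial.coeff d (phi.symm F) = (F.coeff (d 0)).coeff (d 1) := by
      intro d
      conv_lhs => rw [← ee_eq d]
      rw [← coeff_phi, AlgEquiv.apply_symm_apply]
    have hcoeffab : MvPolynomial.coeff (ee a b) (phi.symm F) = (F.coeff a).coeff b := by
      rw [key]; rfl
    refine ⟨phi.symm F, hFJ, ?_, ⟨ee a b, ?_, expPair_ee a b⟩, ?_⟩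
    · intro h0
      apply hb
      rw [← hcoeffab, h0]
      simp
    · rw [MvPolynomial.mem_support_iff, hcoeffab]; exact hb
    · intro d hd
      rw [MvPolynomial.mem_support_iff, key] at hd
      have hd0 : d 0 ≤ a := by
        by_contra h
        rw [Polynomial.coeff_eq_zero_of_degree_lt (lt_of_le_of_lt hdF (by
          exact_mod_cast Nat.lt_of_not_le h))] at hd
        simp at hd
      have hexp : expPair d = (d 0, d 1) := rfl
      rw [hexp, toLex_le_iff]
      rcases lt_or_eq_of_le hd0 with h | h
      · exact Or.inl h
      · refine Or.inr ⟨h, ?_⟩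
        by_contra hgt
        rw [h] at hd
        rw [Polynomial.coeff_eq_zero_of_degree_lt (lt_of_le_of_lt hdFa (by
          exact_mod_cast Nat.lt_of_not_le hgt))] at hd
        simp at hd

lemma leadSet_iff_Vid {I : Ideal (MvPolynomial (Fin 2) ℂ)} {a b : ℕ} :
    (a, b) ∈ leadSet I ↔ ∃ p ∈ Vid (JJ I) a, p ≠ 0 ∧ p.natDegree = b := by
  rw [leadSet_iff]
  constructor
  · rintro ⟨F, hFJ, hdF, hdFa, hb⟩
    refine ⟨F.coeff a, ⟨F, hFJ, hdF, rfl⟩, fun h0 => hb (by simp [h0]), ?_⟩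
    exact le_antisymm (Polynomial.natDegree_le_iff_degree_le.2 hdFa)
      (Polynomial.le_natDegree_of_ne_zero hb)
  · rintro ⟨p, ⟨F, hFJ, hdF, rfl⟩, hp0, hpd⟩
    refine ⟨F, hFJ, hdF, ?_, ?_⟩
    · rw [← hpd]; exact Polynomial.degree_le_natDegree
    · rw [← hpd]
      exact Polynomial.leadingCoeff_ne_zero.2 hp0

/-- The CRT-style combination lemma. -/
lemma mul_mem_Vid_inf {R : Type*} [CommRing R] {J K : Ideal (Polynomial R)} {P Q : R}
    (hP : Polynomial.C P ∈ J) (hQ : Polynomial.C Q ∈ K) (hco : IsCoprime P Q)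
    {a : ℕ} {p q : R} (hp : p ∈ Vid J a) (hq : q ∈ Vid K a) : p * q ∈ Vid (J ⊓ K) a := by
  obtain ⟨F, hFJ, hdF, hFa⟩ := hp
  obtain ⟨G, hGK, hdG, hGa⟩ := hq
  obtain ⟨u, v, huv⟩ := hco
  have hdegC : ∀ (H : Polynomial R) (r : R), H.degree ≤ (a : WithBot ℕ) →
      (H * Polynomial.C r).degree ≤ (a : WithBot ℕ) := by
    intro H r hH
    refine (Polynomial.degree_mul_le _ _).trans
      (le_trans (add_le_add hH Polynomial.degree_C_le) ?_)
    simp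
  refine ⟨F * Polynomial.C (q * v * Q) + G * Polynomial.C (p * u * P),
    Submodule.mem_inf.2 ⟨?_, ?_⟩, ?_, ?_⟩
  · refine add_mem (Ideal.mul_mem_right _ _ hFJ) ?_
    have : G * Polynomial.C (p * u * P) = (G * Polynomial.C (p * u)) * Polynomial.C P := by
      rw [map_mul, mul_assoc]
    rw [this]
    exact Ideal.mul_mem_left _ _ hP
  · refine add_mem ?_ (Ideal.mul_mem_right _ _ hGK)
    have : F * Polynomial.C (q * v * Q) = (F * Polynomial.C (q * v)) * Polynomial.C Q := by
      rw [map_mul, mul_assoc]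
    rw [this]
    exact Ideal.mul_mem_left _ _ hQ
  · exact (Polynomial.degree_add_le _ _).trans (max_le (hdegC _ _ hdF) (hdegC _ _ hdG))
  · rw [Polynomial.coeff_add, Polynomial.coeff_mul_C, Polynomial.coeff_mul_C, hFa, hGa]
    linear_combination p * q * huv

lemma mem_lower_finset {F : Finset ℕ} (hdc : ∀ x ∈ F, ∀ y ≤ x, y ∈ F) (m : ℕ) :
    m ∈ F ↔ m < F.card := by
  constructor
  · intro hm
    have hsub : Finset.range (m + 1) ⊆ F := fun x hx =>
      hdc m hm x (Nat.lt_succ_iff.1 (Finset.mem_range.1 hx))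
    have := Finset.card_le_card hsub
    simpa using this
  · intro hm
    by_contra hmem
    have hsub : F ⊆ Finset.range m := by
      intro x hx
      refine Finset.mem_range.2 ?_
      by_contra h
      exact hmem (hdc x hx m (le_of_not_gt h))
    have := Finset.card_le_card hsub
    simp at this
    omega

lemma column_card {Δ : Set (ℕ × ℕ)} (hstd : IsStandardSet Δ) (hfin : Δ.Finite) (a b : ℕ) :
    (a, b) ∈ Δ ↔ b < ({β ∈ Δ | β.1 = a}).ncard := by
  have hS2fin : {y : ℕ | (a, y) ∈ Δ}.Finite :=
    hfin.preimage (f := fun y => (a, y)) (fun x _ y _ h => congrArg Prod.snd h)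
  have himg : (fun y => (a, y)) '' {y : ℕ | (a, y) ∈ Δ} = {β ∈ Δ | β.1 = a} := by
    ext β
    simp only [Set.mem_image, Set.mem_setOf_eq]
    constructor
    · rintro ⟨y', hy', rfl⟩
      exact ⟨hy', rfl⟩
    · rintro ⟨h1, h2⟩
      refine ⟨β.2, ?_, ?_⟩
      · show (a, β.2) ∈ Δ
        rw [← h2, Prod.mk.eta]
        exact h1
      · show (a, β.2) = β
        rw [← h2, Prod.mk.eta]
  have hcard : ({β ∈ Δ | β.1 = a}).ncard = {y : ℕ | (a, y) ∈ Δ}.ncard := by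
    rw [← himg, Set.ncard_image_of_injective _ (fun x y h => congrArg Prod.snd h)]
  rw [hcard]
  have hdc : ∀ x ∈ hS2fin.toFinset, ∀ y ≤ x, y ∈ hS2fin.toFinset := by
    intro x hx y hy
    rw [Set.Finite.mem_toFinset] at hx ⊢
    by_contra h
    have := hstd (a, y) h (0, x - y)
    have heq : ((a, y) : ℕ × ℕ) + (0, x - y) = (a, x) := by
      simp [Prod.ext_iff]; omega
    rw [heq] at this
    exact this hx
  have hmem : (a, b) ∈ Δ ↔ b ∈ hS2fin.toFinset := by
    rw [Set.Finite.mem_toFinset]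
    exact Iff.rfl
  rw [hmem, mem_lower_finset hdc b, Set.ncard_eq_toFinset_card _ hS2fin]

lemma phi_C (c : ℂ) : phi (MvPolynomial.C c) = Polynomial.C (Polynomial.C c) := by
  have h1 : (MvPolynomial.C c : MvPolynomial (Fin 2) ℂ) = algebraMap ℂ _ c := rfl
  rw [h1, AlgEquiv.commutes]
  rw [Polynomial.algebraMap_apply, Polynomial.algebraMap_apply]
  rfl

lemma psi_sub_pow (c : ℂ) (n : ℕ) :
    psi ((Polynomial.X - Polynomial.C c) ^ n) = (X 1 - MvPolynomial.C c) ^ n := by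
  rw [map_pow, map_sub]
  simp [psi, MvPolynomial.algebraMap_eq]

lemma exists_pow_mem {I : Ideal (MvPolynomial (Fin 2) ℂ)} {lam : ℂ}
    (hsupp : ∀ z ∈ zeroSet I, z.2 = lam) :
    ∃ N : ℕ, (X 1 - MvPolynomial.C lam) ^ N ∈ I := by
  have hv : (X 1 - MvPolynomial.C lam) ∈
      MvPolynomial.vanishingIdeal ℂ (MvPolynomial.zeroLocus ℂ I) := by
    rw [MvPolynomial.mem_vanishingIdeal_iff]
    intro w hw
    have hz : ((w 0, w 1) : ℂ × ℂ) ∈ zeroSet I := by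
      intro f hf
      have hwe : ![w 0, w 1] = w := by
        funext i; fin_cases i <;> simp
      show MvPolynomial.eval ![w 0, w 1] f = 0
      rw [hwe]
      exact hw f hf
    have hl := hsupp _ hz
    simp only [map_sub, MvPolynomial.aeval_X, MvPolynomial.aeval_C, Algebra.algebraMap_self, RingHom.id_apply]
    rw [show w 1 = lam from hl]
    ring
  rw [MvPolynomial.vanishingIdeal_zeroLocus_eq_radical] at hv
  exact Ideal.mem_radical_iff.1 hv

lemma pow_mem_Vid {I : Ideal (MvPolynomial (Fin 2) ℂ)} {g : Polynomial ℂ}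
    (hg : psi g ∈ I) (a : ℕ) : g ∈ Vid (JJ I) a := by
  refine ⟨Polynomial.X ^ a * Polynomial.C g, ?_, ?_, ?_⟩
  · have heq : Polynomial.X ^ a * Polynomial.C g = phi ((X 0) ^ a * psi g) := by
      rw [map_mul, map_pow, phi_X0, phi_psi]
    rw [heq]
    exact phi_mem_JJ.2 (Ideal.mul_mem_left _ _ hg)
  · refine (Polynomial.degree_mul_le _ _).trans ?_
    refine le_trans (add_le_add (le_of_eq (Polynomial.degree_X_pow a)) Polynomial.degree_C_le) ?_
    simp
  · rw [mul_comm]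
    have := Polynomial.coeff_mul_X_pow (Polynomial.C g) a 0
    simpa using this

lemma Vid_single {I : Ideal (MvPolynomial (Fin 2) ℂ)} {Δ : Set (ℕ × ℕ)} {lam : ℂ}
    (hstd : IsStandardSet Δ) (hfin : Δ.Finite) (hin : leadSet I = Δᶜ)
    {N : ℕ} (hN : (X 1 - MvPolynomial.C lam) ^ N ∈ I) (a : ℕ) :
    Vid (JJ I) a =
      Ideal.span {(Polynomial.X - Polynomial.C lam) ^ (({β ∈ Δ | β.1 = a}).ncard)} := by
  set c := ({β ∈ Δ | β.1 = a}).ncard with hc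
  have hNV : (Polynomial.X - Polynomial.C lam) ^ N ∈ Vid (JJ I) a := by
    refine pow_mem_Vid ?_ a
    rw [psi_sub_pow]
    exact hN
  obtain ⟨g, hg⟩ := (IsPrincipalIdealRing.principal (Vid (JJ I) a)).principal
  have hdvd : g ∣ (Polynomial.X - Polynomial.C lam) ^ N := by
    rw [← Ideal.mem_span_singleton]
    show _ ∈ Ideal.span {g}
    rw [show Ideal.span {g} = Vid (JJ I) a from hg.symm]
    exact hNV
  obtain ⟨i, hiN, hass⟩ := (dvd_prime_pow (Polynomial.prime_X_sub_C lam) N).1 hdvd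
  have hspan : Vid (JJ I) a = Ideal.span {(Polynomial.X - Polynomial.C lam) ^ i} := by
    rw [show Vid (JJ I) a = Ideal.span {g} from hg]
    exact Ideal.span_singleton_eq_span_singleton.2 hass
  have hX0 : (Polynomial.X - Polynomial.C lam : Polynomial ℂ) ≠ 0 :=
    Polynomial.X_sub_C_ne_zero lam
  have hdeg : ∀ k : ℕ, ((Polynomial.X - Polynomial.C lam) ^ k).natDegree = k := by
    intro k
    rw [Polynomial.natDegree_pow, Polynomial.natDegree_X_sub_C, mul_one]
  have hci : c ≤ i := by
    have hmem : (Polynomial.X - Polynomial.C lam) ^ i ∈ Vid (JJ I) a := by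
      rw [hspan]; exact Ideal.mem_span_singleton_self _
    have hlS : (a, i) ∈ leadSet I :=
      leadSet_iff_Vid.2 ⟨_, hmem, pow_ne_zero _ hX0, hdeg i⟩
    rw [hin, Set.mem_compl_iff, column_card hstd hfin] at hlS
    omega
  have hic : i ≤ c := by
    have hnotmem : (a, c) ∉ Δ := by
      rw [column_card hstd hfin]
      omega
    have hlS : (a, c) ∈ leadSet I := by
      rw [hin, Set.mem_compl_iff]
      exact hnotmem
    obtain ⟨p, hpV, hp0, hpd⟩ := leadSet_iff_Vid.1 hlS
    rw [hspan, Ideal.mem_span_singleton] at hpV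
    have := Polynomial.natDegree_le_of_dvd hpV hp0
    rw [hdeg i, hpd] at this
    exact this
  rw [hspan, le_antisymm hic hci]

lemma Vid_inf {m : ℕ} (I : Fin (m + 1) → Ideal (MvPolynomial (Fin 2) ℂ))
    (Δ : Fin (m + 1) → Set (ℕ × ℕ)) (lam : Fin (m + 1) → ℂ)
    (hstd : ∀ j, IsStandardSet (Δ j)) (hfin : ∀ j, (Δ j).Finite)
    (hin : ∀ j, leadSet (I j) = (Δ j)ᶜ) (hdist : Function.Injective lam)
    (Npow : Fin (m + 1) → ℕ)
    (hN : ∀ j, (X 1 - MvPolynomial.C (lam j)) ^ (Npow j) ∈ I j) (a : ℕ)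
    (s : Finset (Fin (m + 1))) :
    Vid (JJ (s.inf I)) a =
      Ideal.span {∏ j ∈ s,
        (Polynomial.X - Polynomial.C (lam j)) ^ (({β ∈ Δ j | β.1 = a}).ncard)} := by
  classical
  induction s using Finset.induction_on with
  | empty =>
      rw [Finset.inf_empty, Finset.prod_empty, Ideal.span_singleton_one]
      have h1 : (1 : Polynomial ℂ) ∈ Vid (JJ (⊤ : Ideal (MvPolynomial (Fin 2) ℂ))) a :=
        pow_mem_Vid Submodule.mem_top a
      exact ((Ideal.eq_top_iff_one _).2 h1)
  | @insert j s hj ih =>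
      have hpair : ∀ k ∈ s, IsCoprime (Polynomial.X - Polynomial.C (lam j))
          (Polynomial.X - Polynomial.C (lam k)) := fun k hk =>
        Polynomial.pairwise_coprime_X_sub_C hdist (fun h => hj (h ▸ hk))
      have hJJinf : JJ ((insert j s).inf I) = JJ (I j) ⊓ JJ (s.inf I) := by
        rw [Finset.inf_insert]
        exact Ideal.comap_inf _ _ _
      have hcop : ∀ e : Fin (m + 1) → ℕ,
          IsCoprime ((Polynomial.X - Polynomial.C (lam j)) ^ e j)
            (∏ k ∈ s, (Polynomial.X - Polynomial.C (lam k)) ^ e k) := by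
        intro e
        exact IsCoprime.prod_right fun k hk => (hpair k hk).pow
      have hCQ : Polynomial.C (∏ k ∈ s, (Polynomial.X - Polynomial.C (lam k)) ^ Npow k)
          ∈ JJ (s.inf I) := by
        have hmem : psi (∏ k ∈ s, (Polynomial.X - Polynomial.C (lam k)) ^ Npow k)
            ∈ s.inf I := by
          rw [Submodule.mem_finsetInf]
          intro k hk
          rw [map_prod, ← Finset.mul_prod_erase s _ hk, psi_sub_pow]
          exact Ideal.mul_mem_right _ _ (hN k)
        rw [← phi_psi]
        exact phi_mem_JJ.2 hmem
      have hCP : Polynomial.C ((Polynomial.X - Polynomial.C (lam j)) ^ Npow j)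
          ∈ JJ (I j) := by
        rw [← phi_psi]
        refine phi_mem_JJ.2 ?_
        rw [psi_sub_pow]
        exact hN j
      have hkey := mul_mem_Vid_inf hCP hCQ (hcop Npow)
        (show (Polynomial.X - Polynomial.C (lam j)) ^ (({β ∈ Δ j | β.1 = a}).ncard)
            ∈ Vid (JJ (I j)) a by
          rw [Vid_single (hstd j) (hfin j) (hin j) (hN j)]
          exact Ideal.mem_span_singleton_self _)
        (show (∏ k ∈ s, (Polynomial.X - Polynomial.C (lam k)) ^ (({β ∈ Δ k | β.1 = a}).ncard))
            ∈ Vid (JJ (s.inf I)) a by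
          rw [ih]
          exact Ideal.mem_span_singleton_self _)
      apply le_antisymm
      · intro p hp
        have hp1 : p ∈ Vid (JJ (I j)) a :=
          Vid_mono ((le_of_eq hJJinf).trans inf_le_left) a hp
        have hp2 : p ∈ Vid (JJ (s.inf I)) a :=
          Vid_mono ((le_of_eq hJJinf).trans inf_le_right) a hp
        rw [Vid_single (hstd j) (hfin j) (hin j) (hN j), Ideal.mem_span_singleton] at hp1
        rw [ih, Ideal.mem_span_singleton] at hp2
        rw [Finset.prod_insert hj, Ideal.mem_span_singleton]
        exact ((hcop fun k => ({β ∈ Δ k | β.1 = a}).ncard).mul_dvd hp1 hp2)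
      · refine Ideal.span_le.2 ?_
        rw [Set.singleton_subset_iff, SetLike.mem_coe, Finset.prod_insert hj, hJJinf]
        exact hkey

end C4Aux

/-- Proposition: C4 addition in the second direction computes the lex Gröbner deformation
of an intersection of ideals supported on distinct horizontal lines. -/
theorem stmt14 (m : ℕ) (I : Fin (m + 1) → Ideal (MvPolynomial (Fin 2) ℂ))
    (Δ : Fin (m + 1) → Set (ℕ × ℕ)) (lam : Fin (m + 1) → ℂ)
    (hstd : ∀ j, IsStandardSet (Δ j)) (hfin : ∀ j, (Δ j).Finite)
    (hcolen : ∀ j, FiniteDimensional ℂ (MvPolynomial (Fin 2) ℂ ⧸ I j))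
    (hin : ∀ j, leadSet (I j) = (Δ j)ᶜ)
    (hsupp : ∀ j, ∀ z ∈ zeroSet (I j), z.2 = lam j)
    (hdist : Function.Injective lam) :
    leadSet (⨅ j, I j) =
      {α : ℕ × ℕ | α.2 < ∑ j, ({β ∈ Δ j | β.1 = α.1}).ncard}ᶜ := by
  classical
  choose Npow hNpow using fun j => exists_pow_mem (hsupp j)
  have hiInf : (⨅ j, I j) = Finset.univ.inf I := by
    apply le_antisymm
    · exact Finset.le_inf fun k _ => iInf_le _ k
    · exact le_iInf fun k => Finset.inf_le (Finset.mem_univ k)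
  ext α
  obtain ⟨a, b⟩ := α
  rw [Set.mem_compl_iff, Set.mem_setOf_eq, not_lt,
    show ((a, b) : ℕ × ℕ).1 = a from rfl, show ((a, b) : ℕ × ℕ).2 = b from rfl]
  rw [hiInf, leadSet_iff_Vid,
    Vid_inf I Δ lam hstd hfin hin hdist Npow hNpow a Finset.univ]
  have hX0 : ∀ j : Fin (m + 1), (Polynomial.X - Polynomial.C (lam j) : Polynomial ℂ) ≠ 0 :=
    fun j => Polynomial.X_sub_C_ne_zero (lam j)
  set G := ∏ j : Fin (m + 1),
    (Polynomial.X - Polynomial.C (lam j)) ^ (({β ∈ Δ j | β.1 = a}).ncard) with hG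
  have hG0 : G ≠ 0 := Finset.prod_ne_zero_iff.2 fun j _ => pow_ne_zero _ (hX0 j)
  have hGdeg : G.natDegree = ∑ j, ({β ∈ Δ j | β.1 = a}).ncard := by
    rw [hG, Polynomial.natDegree_prod _ _ fun j _ => pow_ne_zero _ (hX0 j)]
    congr 1
    funext j
    rw [Polynomial.natDegree_pow, Polynomial.natDegree_X_sub_C, mul_one]
  constructor
  · rintro ⟨p, hp, hp0, rfl⟩
    rw [Ideal.mem_span_singleton] at hp
    obtain ⟨q, rfl⟩ := hp
    have hq0 : q ≠ 0 := by
      rintro rfl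
      simp at hp0
    rw [Polynomial.natDegree_mul hG0 hq0, hGdeg]
    exact Nat.le_add_right _ _
  · intro hle
    have hq0 : (Polynomial.X : Polynomial ℂ) ^ (b - ∑ j, ({β ∈ Δ j | β.1 = a}).ncard) ≠ 0 :=
      pow_ne_zero _ Polynomial.X_ne_zero
    refine ⟨G * Polynomial.X ^ (b - ∑ j, ({β ∈ Δ j | β.1 = a}).ncard),
      Ideal.mem_span_singleton.2 ⟨_, rfl⟩, mul_ne_zero hG0 hq0, ?_⟩
    rw [Polynomial.natDegree_mul hG0 hq0, hGdeg, Polynomial.natDegree_pow,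
      Polynomial.natDegree_X, mul_one]
    omega
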